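/- Let x ∈ ℝⁿ with x ≥ 0, z ∈ ℝᵐ, and K ≥ ‖f(x,z)‖_∞. Then (x,z) is a saddle point of L^K if and only if Ax = b and I_{σ(x,z)} f(x,z) = 0 (equivalently: f_i(x,z) = 0 whenever x_i > 0, and f_i(x,z) ≤ 0 whenever x_i = 0). -/

import Mathlib

open Matrix BigOperators

noncomputable def LK {n m : ℕ} (A : Matrix (Fin m) (Fin n) ℝ) (b : Fin m → ℝ)
    (c : Fin n → ℝ) (K : ℝ) (x : Fin n → ℝ) (z : Fin m → ℝ) : ℝ :=
  c ⬝ᵥ x + (1 / 2) * (x ⬝ᵥ x)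
    + (1 / 2) * ((A *ᵥ x - b) ⬝ᵥ (A *ᵥ x - b))
    + z ⬝ᵥ (A *ᵥ x - b)
    + K * ∑ i, max 0 (-(x i))

noncomputable def fmap {n m : ℕ} (A : Matrix (Fin m) (Fin n) ℝ) (b : Fin m → ℝ)
    (c : Fin n → ℝ) (x : Fin n → ℝ) (z : Fin m → ℝ) : Fin n → ℝ :=
  -(Aᵀ *ᵥ z + c + x) - Aᵀ *ᵥ (A *ᵥ x - b)

def sgm {n m : ℕ} (A : Matrix (Fin m) (Fin n) ℝ) (b : Fin m → ℝ)
    (c : Fin n → ℝ) (x : Fin n → ℝ) (z : Fin m → ℝ) : Set (Fin n) :=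
  {i | 0 ≤ fmap A b c x z i ∨ 0 < x i}

open Classical in
noncomputable def ISet {ι : Type*} [Fintype ι] [DecidableEq ι] (S : Set ι) : Matrix ι ι ℝ :=
  Matrix.diagonal fun i => if i ∈ S then 1 else 0

def IsSaddle {n m : ℕ} (A : Matrix (Fin m) (Fin n) ℝ) (b : Fin m → ℝ)
    (c : Fin n → ℝ) (K : ℝ) (xb : Fin n → ℝ) (zb : Fin m → ℝ) : Prop :=
  ∀ x z, LK A b c K xb z ≤ LK A b c K xb zb ∧ LK A b c K xb zb ≤ LK A b c K x zb

/-- Second-order Taylor expansion of `LK` in its `x` argument. -/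
lemma LK_expand {n m : ℕ} (A : Matrix (Fin m) (Fin n) ℝ) (b : Fin m → ℝ)
    (c : Fin n → ℝ) (K : ℝ) (x y : Fin n → ℝ) (z : Fin m → ℝ) :
    LK A b c K y z = LK A b c K x z + (-(fmap A b c x z)) ⬝ᵥ (y - x)
      + (1/2) * ((y - x) ⬝ᵥ (y - x)) + (1/2) * ((A *ᵥ (y - x)) ⬝ᵥ (A *ᵥ (y - x)))
      + K * ((∑ i, max 0 (-(y i))) - ∑ i, max 0 (-(x i))) := by
  unfold LK fmap
  have hy : A *ᵥ y - b = (A *ᵥ x - b) + A *ᵥ (y - x) := by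
    rw [Matrix.mulVec_sub]; abel
  have ht : ∀ (w : Fin m → ℝ) (v : Fin n → ℝ), (Aᵀ *ᵥ w) ⬝ᵥ v = w ⬝ᵥ (A *ᵥ v) := by
    intro w v; rw [Matrix.mulVec_transpose, ← Matrix.dotProduct_mulVec]
  rw [hy]
  simp only [Matrix.mulVec_sub, add_dotProduct, dotProduct_add,
    sub_dotProduct, dotProduct_sub, neg_dotProduct, ht]
  rw [dotProduct_comm (A *ᵥ y) (A *ᵥ x), dotProduct_comm (A *ᵥ x) b,
    dotProduct_comm (A *ᵥ y) b, dotProduct_comm y x]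
  ring

/-- `LK` difference in the `z` argument. -/
lemma LK_z {n m : ℕ} (A : Matrix (Fin m) (Fin n) ℝ) (b : Fin m → ℝ)
    (c : Fin n → ℝ) (K : ℝ) (x : Fin n → ℝ) (z w : Fin m → ℝ) :
    LK A b c K x (z + w) = LK A b c K x z + w ⬝ᵥ (A *ᵥ x - b) := by
  unfold LK
  rw [add_dotProduct]; ring

open Classical in
lemma ISet_mulVec_apply {ι : Type*} [Fintype ι] [DecidableEq ι] (S : Set ι) (v : ι → ℝ)
    (i : ι) : (ISet S *ᵥ v) i = if i ∈ S then v i else 0 := by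
  unfold ISet
  rw [Matrix.mulVec_diagonal]
  by_cases h : i ∈ S <;> simp [h]

/-- For x ≥ 0, z, and K ≥ ‖f(x,z)‖_∞, (x,z) is a saddle point of L^K if and
only if Ax = b and I_{σ(x,z)} f(x,z) = 0. -/
theorem saddle_iff_equilibrium (n m : ℕ) (c : Fin n → ℝ) (b : Fin m → ℝ)
    (A : Matrix (Fin m) (Fin n) ℝ) (x : Fin n → ℝ) (z : Fin m → ℝ) (K : ℝ)
    (hx : ∀ i, 0 ≤ x i)
    (hK : ‖fmap A b c x z‖ ≤ K) :
    IsSaddle A b c K x z ↔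
      (A *ᵥ x = b ∧ ISet (sgm A b c x z) *ᵥ fmap A b c x z = 0) := by
  classical
  set f := fmap A b c x z with hf
  have hK0 : (0:ℝ) ≤ K := (norm_nonneg _).trans hK
  have habs : ∀ i, |f i| ≤ K := by
    intro i
    calc |f i| = ‖f i‖ := (Real.norm_eq_abs _).symm
    _ ≤ ‖f‖ := norm_le_pi_norm f i
    _ ≤ K := hK
  have sum0 : ∑ j, max 0 (-(x j)) = 0 := by
    apply Finset.sum_eq_zero
    intro j _
    exact max_eq_left (by linarith [hx j])
  constructor
  · intro hs
    -- Step 1: A x = b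
    have hw := (hs x (z + (A *ᵥ x - b))).1
    rw [LK_z] at hw
    have hdz : (A *ᵥ x - b) ⬝ᵥ (A *ᵥ x - b) = 0 :=
      le_antisymm (by linarith) (Finset.sum_nonneg fun i _ => mul_self_nonneg _)
    have hAxb : A *ᵥ x = b := sub_eq_zero.mp (dotProduct_self_eq_zero.mp hdz)
    -- Step 2: master inequality
    have master : ∀ (i : Fin n) (t : ℝ), 0 ≤ x i + t →
        0 ≤ -(f i) * t + (1/2)*(t*t)
          + (1/2)*(((fun k => A k i) ⬝ᵥ (fun k => A k i))*(t*t)) := by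
      intro i t hxt
      set y : Fin n → ℝ := x + Pi.single i t with hy
      have h := (hs y z).2
      rw [LK_expand A b c K x y z] at h
      have h1 : y - x = Pi.single i t := by rw [hy]; exact add_sub_cancel_left x _
      rw [h1] at h
      have h2 : (-f) ⬝ᵥ Pi.single i t = -(f i) * t := by
        rw [dotProduct_single]; simp
      have h3 : Pi.single i t ⬝ᵥ Pi.single i t = t * t := by
        rw [dotProduct_single, Pi.single_eq_same]
      have h4 : (A *ᵥ Pi.single i t) ⬝ᵥ (A *ᵥ Pi.single i t)
          = ((fun k => A k i) ⬝ᵥ (fun k => A k i)) * (t*t) := by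
        rw [Matrix.mulVec_single, dotProduct, dotProduct, Finset.sum_mul]
        exact Finset.sum_congr rfl fun k _ => by
          simp only [Pi.smul_apply, Matrix.col_apply, op_smul_eq_mul]; ring
      have h5 : ∑ j, max 0 (-(y j)) = 0 := by
        apply Finset.sum_eq_zero
        intro j _
        rcases eq_or_ne j i with rfl | hj
        · simp only [hy, Pi.add_apply, Pi.single_eq_same]
          exact max_eq_left (by linarith)
        · simp only [hy, Pi.add_apply, Pi.single_eq_of_ne hj, add_zero]
          exact max_eq_left (by linarith [hx j])
      rw [h2, h3, h4, h5, sum0] at h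
      linarith
    -- Step 3: pointwise conditions
    have hpos : ∀ i, 0 < x i → f i = 0 := by
      intro i hxi
      by_contra hfi
      set C : ℝ := (fun k => A k i) ⬝ᵥ (fun k => A k i) with hC
      have hC0 : 0 ≤ C := Finset.sum_nonneg fun k _ => mul_self_nonneg _
      have habsf : 0 < |f i| := abs_pos.mpr hfi
      set ε : ℝ := min (x i / (|f i| + 1)) (1/(1+C)) with hε
      have hε0 : 0 < ε := lt_min (by positivity) (by positivity)
      have hε1 : ε * (|f i| + 1) ≤ x i := by
        rw [← le_div_iff₀ (by positivity)]
        exact min_le_left _ _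
      have hε2 : ε * (1 + C) ≤ 1 := by
        rw [← le_div_iff₀ (by positivity)]
        exact min_le_right _ _
      have hnab : -|f i| ≤ f i := neg_abs_le (f i)
      have hab : f i ≤ |f i| := le_abs_self (f i)
      have hstep : 0 ≤ x i + ε * f i := by nlinarith
      have hm := master i (ε * f i) hstep
      have hfsq : 0 < f i * f i := mul_self_pos.mpr hfi
      have hint : ε * (f i * f i) * (ε * (1 + C)) ≤ ε * (f i * f i) * 1 :=
        mul_le_mul_of_nonneg_left hε2 (by positivity)
      nlinarith [mul_pos hε0 hfsq]
    have hzer : ∀ i, x i = 0 → f i ≤ 0 := by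
      intro i hxi
      by_contra hfi
      push_neg at hfi
      set C : ℝ := (fun k => A k i) ⬝ᵥ (fun k => A k i) with hC
      have hC0 : 0 ≤ C := Finset.sum_nonneg fun k _ => mul_self_nonneg _
      set ε : ℝ := 1/(1+C) with hε
      have hε0 : 0 < ε := by positivity
      have h1C : (0:ℝ) < 1 + C := by linarith
      have hε2 : ε * (1 + C) = 1 := by
        rw [hε]; field_simp
      have hstep : 0 ≤ x i + ε * f i := by nlinarith
      have hm := master i (ε * f i) hstep
      nlinarith [mul_pos hε0 (mul_pos hfi hfi)]
    refine ⟨hAxb, ?_⟩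
    funext i
    rw [ISet_mulVec_apply, Pi.zero_apply]
    by_cases hi : i ∈ sgm A b c x z
    · rw [if_pos hi]
      rcases hi with hfi | hxi
      · rcases (hx i).lt_or_eq with h | h
        · exact hpos i h
        · exact le_antisymm (hzer i h.symm) hfi
      · exact hpos i hxi
    · exact if_neg hi
  · rintro ⟨hAxb, hI⟩
    have hmem : ∀ i, i ∈ sgm A b c x z → f i = 0 := by
      intro i hi
      have h2 := congrFun hI i
      rwa [ISet_mulVec_apply, Pi.zero_apply, if_pos hi] at h2
    have hpos : ∀ i, 0 < x i → f i = 0 := fun i hi => hmem i (Or.inr hi)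
    have hzer : ∀ i, x i = 0 → f i ≤ 0 := by
      intro i _
      by_contra h
      push_neg at h
      exact absurd (hmem i (Or.inl h.le)) h.ne'
    have h0 : A *ᵥ x - b = 0 := sub_eq_zero_of_eq hAxb
    intro y z'
    constructor
    · apply le_of_eq
      simp [LK, h0]
    · rw [LK_expand A b c K x y z, sum0, sub_zero]
      have hq1 : 0 ≤ (y - x) ⬝ᵥ (y - x) := Finset.sum_nonneg fun k _ => mul_self_nonneg _
      have hq2 : 0 ≤ (A *ᵥ (y - x)) ⬝ᵥ (A *ᵥ (y - x)) :=
        Finset.sum_nonneg fun k _ => mul_self_nonneg _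
      have hlin : 0 ≤ (-f) ⬝ᵥ (y - x) + K * ∑ i, max 0 (-(y i)) := by
        rw [dotProduct, Finset.mul_sum, ← Finset.sum_add_distrib]
        apply Finset.sum_nonneg
        intro i _
        simp only [Pi.neg_apply, Pi.sub_apply]
        have hbound := abs_le.mp (habs i)
        have hmax : 0 ≤ max 0 (-(y i)) := le_max_left _ _
        rcases (hx i).lt_or_eq with h | h
        · rw [hpos i h]
          nlinarith
        · have hfle : f i ≤ 0 := hzer i h.symm
          rcases le_or_gt 0 (y i) with hy | hy
          · have : 0 ≤ -(f i) * (y i - x i) := by nlinarith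
            nlinarith
          · have hmax2 : max 0 (-(y i)) = -(y i) := max_eq_right (by linarith)
            rw [hmax2]
            nlinarith
      linarith
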